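/- Every Nash equilibrium y lies between the extreme conviction values: min_{1≤k≤N} θ_k ≤ y_i^p ≤ max_{1≤k≤N} θ_k for every i = 1,…,N. Moreover, y_i^p ≥ θ_i − M/σ for every i. -/
import Mathlib


open Filter Topology Finset Real

/-- A priori bounds on Nash equilibria: every Nash equilibrium lies between the extreme
conviction values, `min_k θ_k ≤ y_i^p ≤ max_k θ_k`, and satisfies `y_i^p ≥ θ_i - M/σ`. -/
theorem nash_equilibrium_apriori_bounds
    {N : ℕ} (hN : 0 < N)
    (m θ : Fin N → ℝ) (hm : ∀ i, 0 < m i) (hθ : ∀ i, 0 < θ i)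
    {σ p : ℝ} (hσ : 0 < σ) (hp : 0 < p)
    (y : Fin N → ℝ) (hpos : ∀ i, 0 < y i)
    (heq : ∀ i, ∑ k, m k * (y k - y i) + σ * (θ i - y i ^ p) * y i = 0) :
    ∀ i, (⨅ k, θ k) ≤ y i ^ p ∧ y i ^ p ≤ (⨆ k, θ k) ∧
      θ i - (∑ k, m k) / σ ≤ y i ^ p := by
  have hNE : Nonempty (Fin N) := ⟨⟨0, hN⟩⟩
  -- max index
  obtain ⟨jM, hjM⟩ := Finite.exists_max y
  obtain ⟨jm, hjm⟩ := Finite.exists_min y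
  -- at the max index, y_jM ^ p ≤ θ jM
  have hmaxle : y jM ^ p ≤ θ jM := by
    have hsum : ∑ k, m k * (y k - y jM) ≤ 0 := by
      apply Finset.sum_nonpos
      intro k _
      have := hjM k
      nlinarith [hm k]
    have h := heq jM
    nlinarith [hpos jM, mul_pos hσ (hpos jM)]
  have hminle : θ jm ≤ y jm ^ p := by
    have hsum : 0 ≤ ∑ k, m k * (y k - y jm) := by
      apply Finset.sum_nonneg
      intro k _
      have := hjm k
      nlinarith [hm k]
    have h := heq jm
    nlinarith [hpos jm, mul_pos hσ (hpos jm)]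
  intro i
  have hyi := hpos i
  refine ⟨?_, ?_, ?_⟩
  · have h1 : y jm ^ p ≤ y i ^ p :=
      Real.rpow_le_rpow (hpos jm).le (hjm i) hp.le
    have h2 : (⨅ k, θ k) ≤ θ jm := ciInf_le (Set.Finite.bddBelow (Set.finite_range θ)) jm
    linarith
  · have h1 : y i ^ p ≤ y jM ^ p :=
      Real.rpow_le_rpow (hpos i).le (hjM i) hp.le
    have h2 : θ jM ≤ ⨆ k, θ k := le_ciSup (Set.Finite.bddAbove (Set.finite_range θ)) jM
    linarith
  · have h := heq i
    have hsum : -((∑ k, m k) * y i) ≤ ∑ k, m k * (y k - y i) := by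
      rw [Finset.sum_mul, ← Finset.sum_neg_distrib]
      apply Finset.sum_le_sum
      intro k _
      have := hpos k
      nlinarith [hm k]
    have key : σ * (θ i - y i ^ p) * y i ≤ (∑ k, m k) * y i := by linarith
    have key2 : σ * (θ i - y i ^ p) ≤ ∑ k, m k := le_of_mul_le_mul_right key hyi
    have h3 : θ i - y i ^ p ≤ (∑ k, m k) / σ := (le_div_iff₀ hσ).mpr (by linarith)
    linarith
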